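/- arXiv:1607.02081 — 2 statements merged into one kernel-verified Lean document; each statement's English description precedes it below -/
import Mathlib

section
/- Let N ≥ 3 and let n be an integer with 1 ≤ n ≤ N. Then S_n ⊆ R_n ⊆ C_n ⊆ V_n. -/
open Real

/-- The golden ratio `(1 + √5)/2`. -/
noncomputable def phiR : ℝ := (1 + Real.sqrt 5) / 2

/-- `mmax p q n = max(h_n·log p, h_{n-1}·log q)`, the logarithmic Mahler measure
of `p^{h_n}/q^{h_{n-1}}` for distinct primes `p`, `q`, where `h` is Fibonacci. -/
noncomputable def mmax (p q n : ℕ) : ℝ :=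
  max ((Nat.fib n : ℝ) * Real.log p) ((Nat.fib (n - 1) : ℝ) * Real.log q)

/-- `gmax n = max(h_n, φ·h_{n-1})`. -/
noncomputable def gmax (n : ℕ) : ℝ :=
  max (Nat.fib n : ℝ) (phiR * (Nat.fib (n - 1) : ℝ))

/-- The equation defining `t_n(p,q)`:
`m(p^{h_n}/q^{h_{n-1}})^t = m(p^{h_{n-1}}/q^{h_{n-2}})^t + m(p^{h_{n-2}}/q^{h_{n-3}})^t`. -/
def peq (p q n : ℕ) (t : ℝ) : Prop :=
  mmax p q n ^ t = mmax p q (n - 1) ^ t + mmax p q (n - 2) ^ t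

/-- The equation defining `s_n`:
`max(h_n, φ h_{n-1})^t = max(h_{n-1}, φ h_{n-2})^t + max(h_{n-2}, φ h_{n-3})^t`. -/
def geq (n : ℕ) (t : ℝ) : Prop :=
  gmax n ^ t = gmax (n - 1) ^ t + gmax (n - 2) ^ t

/-- Condition (W) on a pair of primes `(p,q)` relative to `N`. -/
def CondW (N p q : ℕ) : Prop :=
  ((Nat.fib N : ℝ) / Nat.fib (N - 1) < Real.log q / Real.log p ∧
    Real.log q / Real.log p < (Nat.fib (N - 1) : ℝ) / Nat.fib (N - 2)) ∨
  ((Nat.fib (N - 1) : ℝ) / Nat.fib (N - 2) < Real.log q / Real.log p ∧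
    Real.log q / Real.log p < (Nat.fib N : ℝ) / Nat.fib (N - 1))

/-- `V_n`: vectors `x ∈ ℕ^N` (1-based entry `i` is `x ⟨i-1⟩`) with
`Σ x_i h_i = h_n` and `Σ x_i h_{i-1} = h_{n-1}`. -/
def Vset (N n : ℕ) : Set (Fin N → ℕ) :=
  {x | ∑ i, x i * Nat.fib ((i : ℕ) + 1) = Nat.fib n ∧
       ∑ i, x i * Nat.fib (i : ℕ) = Nat.fib (n - 1)}

/-- The measure function `f_x(t) = (Σ_{i=1}^N x_i·max(h_i log p, h_{i-1} log q)^t)^{1/t}`. -/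
noncomputable def fmeas (N p q : ℕ) (x : Fin N → ℕ) (t : ℝ) : ℝ :=
  (∑ i, (x i : ℝ) * mmax p q ((i : ℕ) + 1) ^ t) ^ (1 / t)

/-- `x_n(i)`: the vector whose (i−2)nd (1-based) entry is `h_{n+1−i}`, whose
(i−1)st entry is `h_{n+2−i}`, and whose other entries are 0.  (For `i = 2`, `n = 1`
this gives `x_1(2) = (1,0,…,0)`.) -/
def xvec (N n i : ℕ) : Fin N → ℕ := fun j =>
  if (j : ℕ) + 3 = i then Nat.fib (n + 1 - i)
  else if (j : ℕ) + 2 = i then Nat.fib (n + 2 - i)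
  else 0

/-- `S_n = {x_n(i) : 3 ≤ i ≤ n+1}` for `n ≥ 2`, and `S_1 = {x_1(2)}`. -/
def Sset (N n : ℕ) : Set (Fin N → ℕ) :=
  if n = 1 then {xvec N 1 2}
  else {x | ∃ i, 3 ≤ i ∧ i ≤ n + 1 ∧ x = xvec N n i}

/-- `z` is almost consecutive-free: `z_j·z_{j+1} ≠ 0` implies `z_i = 0` for all `i > j+1`. -/
def ACF (N : ℕ) (z : Fin N → ℕ) : Prop :=
  ∀ (j : Fin N) (hj : (j : ℕ) + 1 < N),
    z j * z ⟨(j : ℕ) + 1, hj⟩ ≠ 0 → ∀ i : Fin N, (j : ℕ) + 1 < (i : ℕ) → z i = 0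

/-- `C_n`: the almost consecutive-free elements of `V_n`. -/
def Cset (N n : ℕ) : Set (Fin N → ℕ) := {z ∈ Vset N n | ACF N z}

/-- A factorization of `z ∈ V_n`: a `K`-tuple `x` with `x k ∈ V_{idx k}`,
`1 ≤ idx k ≤ n`, and `z = Σ_k x k`. -/
def IsFactorization (N n : ℕ) (z : Fin N → ℕ) {K : ℕ}
    (idx : Fin K → ℕ) (x : Fin K → Fin N → ℕ) : Prop :=
  (∀ k, 1 ≤ idx k ∧ idx k ≤ n ∧ x k ∈ Vset N (idx k)) ∧ z = ∑ k, x k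

/-- A tuple is `S`-type if each component lies in `∪_{i=1}^n S_i`. -/
def STypeFac (N n : ℕ) {K : ℕ} (x : Fin K → Fin N → ℕ) : Prop :=
  ∀ k, ∃ i, 1 ≤ i ∧ i ≤ n ∧ x k ∈ Sset N i

/-- `z` is `S`-restricted: every non-trivial (i.e. `K ≠ 1`) factorization is `S`-type. -/
def SRestricted (N n : ℕ) (z : Fin N → ℕ) : Prop :=
  ∀ (K : ℕ) (idx : Fin K → ℕ) (x : Fin K → Fin N → ℕ),
    IsFactorization N n z idx x → K ≠ 1 → STypeFac N n x

/-- `R_n`: the `S`-restricted elements of `C_n`. -/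
def Rset (N n : ℕ) : Set (Fin N → ℕ) := {z ∈ Cset N n | SRestricted N n z}

/-- The infimum attaining set `U_x = {t > 0 : f_x(t) = min{f_y(t) : y ∈ V_j}}`. -/
def Uset (N p q j : ℕ) (x : Fin N → ℕ) : Set ℝ :=
  {t | 0 < t ∧ IsLeast ((fun y => fmeas N p q y t) '' Vset N j) (fmeas N p q x t)}

/-- The shift map `λ((x_1,…,x_N)) = (0,x_1,…,x_{N-1})`. -/
def shiftMap (N : ℕ) (x : Fin N → ℕ) : Fin N → ℕ := fun j =>
  if (j : ℕ) = 0 then 0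
  else x ⟨(j : ℕ) - 1, lt_of_le_of_lt (Nat.sub_le _ _) j.isLt⟩

/-! ### Auxiliary lemmas for `stmt10` -/

private lemma sum_eq_pair' {N : ℕ} (f g : Fin N → ℕ) (p q : Fin N) (hpq : p ≠ q)
    (hf : ∀ j, j ≠ p → j ≠ q → f j = 0) :
    ∑ j, f j * g j = f p * g p + f q * g q := by
  rw [← Finset.sum_subset (Finset.subset_univ ({p, q} : Finset (Fin N)))]
  · rw [Finset.sum_pair hpq]
  · intro j _ hj
    simp only [Finset.mem_insert, Finset.mem_singleton, not_or] at hj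
    rw [hf j hj.1 hj.2, zero_mul]

private lemma xvec_eq_zero {N n i : ℕ} (j : Fin N) (h3 : (j : ℕ) + 3 ≠ i)
    (h2 : (j : ℕ) + 2 ≠ i) : xvec N n i j = 0 := by
  simp [xvec, h3, h2]

private lemma xvec_fst {N n i : ℕ} (hi : 3 ≤ i) (hiN : i ≤ N + 1) :
    xvec N n i ⟨i - 3, by omega⟩ = Nat.fib (n + 1 - i) := by
  simp only [xvec]
  rw [if_pos (by omega)]

private lemma xvec_snd {N n i : ℕ} (hi : 3 ≤ i) (hiN : i ≤ N + 1) :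
    xvec N n i ⟨i - 2, by omega⟩ = Nat.fib (n + 2 - i) := by
  simp only [xvec]
  rw [if_neg (by omega), if_pos (by omega)]

private lemma fib_idA (i m : ℕ) (hi : 3 ≤ i) (him : i ≤ m + 1) :
    Nat.fib (m + 1 - i) * Nat.fib (i - 2) + Nat.fib (m + 2 - i) * Nat.fib (i - 1)
      = Nat.fib m := by
  have h := Nat.fib_add (m + 1 - i) (i - 2)
  have e1 : m + 1 - i + (i - 2) + 1 = m := by omega
  have e2 : m + 1 - i + 1 = m + 2 - i := by omega
  have e3 : i - 2 + 1 = i - 1 := by omega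
  rw [e1, e2, e3] at h
  exact h.symm

private lemma fib_idB (i m : ℕ) (hi : 3 ≤ i) (him : i ≤ m + 1) :
    Nat.fib (m + 1 - i) * Nat.fib (i - 3) + Nat.fib (m + 2 - i) * Nat.fib (i - 2)
      = Nat.fib (m - 1) := by
  have h := Nat.fib_add (m + 1 - i) (i - 3)
  have e1 : m + 1 - i + (i - 3) + 1 = m - 1 := by omega
  have e2 : m + 1 - i + 1 = m + 2 - i := by omega
  have e3 : i - 3 + 1 = i - 2 := by omega
  rw [e1, e2, e3] at h
  exact h.symm

private lemma xvec_mem_V (N n i : ℕ) (hi : 3 ≤ i) (hin : i ≤ n + 1) (hnN : n ≤ N) :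
    xvec N n i ∈ Vset N n := by
  have hiN : i ≤ N + 1 := by omega
  have hpq : (⟨i - 3, by omega⟩ : Fin N) ≠ ⟨i - 2, by omega⟩ := by
    intro h
    have := Fin.mk.injEq (i-3) (by omega : i - 3 < N) (i-2) (by omega : i - 2 < N) ▸ h
    omega
  constructor
  · rw [sum_eq_pair' _ _ _ _ hpq (fun j h1 h2 => xvec_eq_zero j
      (fun h => h1 (Fin.ext (show (j:ℕ) = i - 3 by omega)))
      (fun h => h2 (Fin.ext (show (j:ℕ) = i - 2 by omega)))),
      xvec_fst hi hiN, xvec_snd hi hiN]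
    show Nat.fib (n+1-i) * Nat.fib (i - 3 + 1) + Nat.fib (n+2-i) * Nat.fib (i - 2 + 1)
      = Nat.fib n
    rw [show i - 3 + 1 = i - 2 from by omega, show i - 2 + 1 = i - 1 from by omega]
    exact fib_idA i n hi hin
  · rw [sum_eq_pair' _ _ _ _ hpq (fun j h1 h2 => xvec_eq_zero j
      (fun h => h1 (Fin.ext (show (j:ℕ) = i - 3 by omega)))
      (fun h => h2 (Fin.ext (show (j:ℕ) = i - 2 by omega)))),
      xvec_fst hi hiN, xvec_snd hi hiN]
    exact fib_idB i n hi hin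

private lemma xvec_ACF (N n i : ℕ) : ACF N (xvec N n i) := by
  intro j hj hne i' hgt
  have hjne : xvec N n i j ≠ 0 := fun h => hne (by rw [h, zero_mul])
  have hle : i ≤ (j : ℕ) + 3 := by
    by_contra h
    exact hjne (xvec_eq_zero j (by omega) (by omega))
  exact xvec_eq_zero i' (by omega) (by omega)

private lemma cassini : ∀ k : ℕ,
    (Nat.fib k : ℤ) * Nat.fib (k + 2) - (Nat.fib (k + 1) : ℤ) ^ 2 = (-1) ^ (k + 1) := by
  intro k
  induction k with
  | zero => simp
  | succ k ih =>
    have e1 : (Nat.fib (k + 3) : ℤ) = Nat.fib (k + 1) + Nat.fib (k + 2) := by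
      exact_mod_cast (Nat.fib_add_two (n := k + 1))
    have e2 : (Nat.fib (k + 2) : ℤ) = Nat.fib k + Nat.fib (k + 1) := by
      exact_mod_cast (Nat.fib_add_two (n := k))
    have : (Nat.fib (k+1) : ℤ) * Nat.fib (k + 3) - (Nat.fib (k + 2) : ℤ) ^ 2
        = -((Nat.fib k : ℤ) * Nat.fib (k + 2) - (Nat.fib (k + 1) : ℤ) ^ 2) := by
      rw [e1]; nlinarith [e2]
    rw [show k + 1 + 2 = k + 3 from rfl, this, ih, pow_succ]
    ring

private lemma pair_uniq (i : ℕ) (hi : 3 ≤ i) (a b a' b' : ℕ)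
    (h1 : a * Nat.fib (i - 2) + b * Nat.fib (i - 1)
        = a' * Nat.fib (i - 2) + b' * Nat.fib (i - 1))
    (h2 : a * Nat.fib (i - 3) + b * Nat.fib (i - 2)
        = a' * Nat.fib (i - 3) + b' * Nat.fib (i - 2)) :
    a = a' ∧ b = b' := by
  obtain ⟨k, rfl⟩ : ∃ k, i = k + 3 := ⟨i - 3, by omega⟩
  simp only [show k + 3 - 2 = k + 1 from by omega, show k + 3 - 1 = k + 2 from by omega,
    show k + 3 - 3 = k from by omega] at h1 h2
  have H1 : (a : ℤ) * Nat.fib (k + 1) + (b : ℤ) * Nat.fib (k + 2)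
      = (a' : ℤ) * Nat.fib (k + 1) + (b' : ℤ) * Nat.fib (k + 2) := by exact_mod_cast h1
  have H2 : (a : ℤ) * Nat.fib k + (b : ℤ) * Nat.fib (k + 1)
      = (a' : ℤ) * Nat.fib k + (b' : ℤ) * Nat.fib (k + 1) := by exact_mod_cast h2
  have key : ((a : ℤ) - a') * ((Nat.fib (k + 1) : ℤ) ^ 2 - Nat.fib k * Nat.fib (k + 2)) = 0 := by
    linear_combination (Nat.fib (k + 1) : ℤ) * H1 - (Nat.fib (k + 2) : ℤ) * H2
  have hc := cassini k
  have hdet : ((Nat.fib (k + 1) : ℤ) ^ 2 - Nat.fib k * Nat.fib (k + 2)) ≠ 0 := by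
    intro h
    have : ((-1 : ℤ)) ^ (k + 1) = 0 := by linarith [hc]
    simp at this
  have hA : (a : ℤ) = a' := by
    rcases mul_eq_zero.mp key with h | h
    · linarith
    · exact absurd h hdet
  have haa : a = a' := by exact_mod_cast hA
  refine ⟨haa, ?_⟩
  have hfib2 : 0 < (Nat.fib (k + 2) : ℤ) := by
    exact_mod_cast Nat.fib_pos.mpr (by omega)
  have : ((b : ℤ) - b') * Nat.fib (k + 2) = 0 := by linear_combination H1 - hA * (Nat.fib (k+1) : ℤ)
  rcases mul_eq_zero.mp this with h | h
  · have : (b : ℤ) = b' := by linarith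
    exact_mod_cast this
  · exact absurd h (ne_of_gt hfib2)

private lemma fib_sub1 (i : ℕ) (hi : 3 ≤ i) :
    Nat.fib (i - 1) = Nat.fib (i - 3) + Nat.fib (i - 2) := by
  obtain ⟨i', rfl⟩ : ∃ i', i = i' + 3 := ⟨i - 3, by omega⟩
  rw [show i' + 3 - 1 = i' + 2 from by omega, show i' + 3 - 3 = i' from by omega,
    show i' + 3 - 2 = i' + 1 from by omega]
  exact Nat.fib_add_two

private lemma fib_sub2 (i : ℕ) (hi : 3 ≤ i) :
    Nat.fib i = Nat.fib (i - 2) + Nat.fib (i - 1) := by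
  obtain ⟨i', rfl⟩ : ∃ i', i = i' + 3 := ⟨i - 3, by omega⟩
  rw [show i' + 3 - 1 = i' + 2 from by omega, show i' + 3 - 2 = i' + 1 from by omega]
  exact Nat.fib_add_two

private lemma fib_pred_add (m : ℕ) (hm : 1 ≤ m) :
    Nat.fib (m - 1) + Nat.fib m = Nat.fib (m + 1) := by
  obtain ⟨m', rfl⟩ : ∃ m', m = m' + 1 := ⟨m - 1, by omega⟩
  rw [show m' + 1 - 1 = m' from by omega]
  exact Nat.fib_add_two.symm

private lemma xvec_SRestricted (N n i : ℕ) (hi : 3 ≤ i) (hin : i ≤ n + 1) (hnN : n ≤ N) :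
    SRestricted N n (xvec N n i) := by
  intro K idx x hfac _ k
  obtain ⟨hcomp, hsum⟩ := hfac
  obtain ⟨hm1, hmn, hV⟩ := hcomp k
  set m := idx k with hmdef
  have hiN : i ≤ N + 1 := by omega
  set p : Fin N := ⟨i - 3, by omega⟩ with hp
  set q : Fin N := ⟨i - 2, by omega⟩ with hq
  have hpv : (p : ℕ) = i - 3 := rfl
  have hqv : (q : ℕ) = i - 2 := rfl
  have hpq : p ≠ q := by
    intro h
    have := congrArg Fin.val h
    omega
  -- support of x k
  have hxle : ∀ j, x k j ≤ xvec N n i j := by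
    intro j
    have : xvec N n i j = ∑ k', x k' j := by rw [hsum]; simp
    rw [this]
    exact Finset.single_le_sum (f := fun k' => x k' j) (fun _ _ => Nat.zero_le _)
      (Finset.mem_univ k)
  have hsupp : ∀ j, j ≠ p → j ≠ q → x k j = 0 := by
    intro j h1 h2
    have hz : xvec N n i j = 0 := xvec_eq_zero j
      (fun h => h1 (Fin.ext (by omega)))
      (fun h => h2 (Fin.ext (by omega)))
    have := hxle j
    omega
  set a := x k p with hadef
  set b := x k q with hbdef
  have eqI : a * Nat.fib (i - 2) + b * Nat.fib (i - 1) = Nat.fib m := by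
    have h := hV.1
    rw [sum_eq_pair' _ _ p q hpq hsupp] at h
    rw [show ((p : ℕ) + 1) = i - 2 from by omega,
        show ((q : ℕ) + 1) = i - 1 from by omega] at h
    exact h
  have eqII : a * Nat.fib (i - 3) + b * Nat.fib (i - 2) = Nat.fib (m - 1) := by
    have h := hV.2
    rw [sum_eq_pair' _ _ p q hpq hsupp] at h
    rw [show ((p : ℕ)) = i - 3 from hpv,
        show ((q : ℕ)) = i - 2 from hqv] at h
    exact h
  have efib1 := fib_sub1 i hi
  have efib2 := fib_sub2 i hi
  have efibm := fib_pred_add m hm1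
  have eqIII : a * Nat.fib (i - 1) + b * Nat.fib i = Nat.fib (m + 1) := by
    calc a * Nat.fib (i - 1) + b * Nat.fib i
        = (a * Nat.fib (i - 3) + b * Nat.fib (i - 2))
          + (a * Nat.fib (i - 2) + b * Nat.fib (i - 1)) := by
            conv_lhs => rw [efib1, efib2]
            ring
      _ = Nat.fib (m - 1) + Nat.fib m := by rw [eqI, eqII]
      _ = Nat.fib (m + 1) := efibm
  have hfibm : 1 ≤ Nat.fib m := Nat.fib_pos.mpr (by omega)
  rcases show m + 3 ≤ i ∨ m + 2 = i ∨ i ≤ m + 1 from by omega with hc | hc | hc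
  · -- impossible: m ≤ i - 3
    exfalso
    have hlt : Nat.fib (m + 1) < Nat.fib (m + 2) := Nat.fib_lt_fib_succ (by omega)
    have hle1 : Nat.fib (m + 2) ≤ Nat.fib (i - 1) := Nat.fib_mono (by omega)
    have hle2 : Nat.fib (i - 1) ≤ Nat.fib i := Nat.fib_mono (by omega)
    rcases Nat.eq_zero_or_pos a with ha | ha
    · rcases Nat.eq_zero_or_pos b with hb | hb
      · rw [ha, hb] at eqI; simp at eqI; omega
      · have h1 : Nat.fib i ≤ b * Nat.fib i := Nat.le_mul_of_pos_left _ hb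
        rw [ha] at eqIII
        simp at eqIII
        omega
    · have h1 : Nat.fib (i - 1) ≤ a * Nat.fib (i - 1) := Nat.le_mul_of_pos_left _ ha
      have h2 : a * Nat.fib (i - 1) ≤ a * Nat.fib (i - 1) + b * Nat.fib i := Nat.le_add_right _ _
      omega
  · -- m = i - 2 : x k is the unit vector at p
    have hm1' : m + 1 = i - 1 := by omega
    rw [hm1'] at eqIII
    have hlt : Nat.fib (i - 1) < Nat.fib i := by
      have := Nat.fib_lt_fib_succ (n := i - 1) (by omega)
      rwa [show i - 1 + 1 = i from by omega] at this
    have hb0 : b = 0 := by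
      by_contra hb
      have h1 : Nat.fib i ≤ b * Nat.fib i := Nat.le_mul_of_pos_left _ (by omega)
      have h2 : b * Nat.fib i ≤ a * Nat.fib (i - 1) + b * Nat.fib i := Nat.le_add_left _ _
      omega
    have hfibi1 : 0 < Nat.fib (i - 1) := Nat.fib_pos.mpr (by omega)
    have ha1 : a = 1 := by
      rw [hb0] at eqIII
      simp at eqIII
      rcases Nat.eq_zero_or_pos a with h | h
      · rw [h] at eqIII; simp at eqIII; omega
      · nlinarith [eqIII]
    -- x k = xvec N m (i-1)
    have hxk : x k = xvec N m (i - 1) := by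
      funext j
      rcases eq_or_ne j p with rfl | hjp
      · rw [← hadef, ha1]
        have : xvec N m (i - 1) p = Nat.fib (m + 2 - (i - 1)) := by
          simp only [xvec]
          rw [if_neg (by omega), if_pos (by omega)]
        rw [this, show m + 2 - (i - 1) = 1 from by omega, Nat.fib_one]
      · rcases eq_or_ne j q with rfl | hjq
        · rw [← hbdef, hb0]
          exact (xvec_eq_zero q (by omega) (by omega)).symm
        · rw [hsupp j hjp hjq]
          simp only [xvec]
          split_ifs with h1 h2
          · rw [show m + 1 - (i - 1) = 0 from by omega, Nat.fib_zero]
          · exact absurd (Fin.ext (show (j : ℕ) = (p : ℕ) by omega)) hjp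
          · rfl
    rcases eq_or_ne i 3 with rfl | hi4
    · refine ⟨1, le_refl 1, by omega, ?_⟩
      rw [Sset, if_pos rfl, Set.mem_singleton_iff, hxk]
      rw [show m = 1 from by omega]
    · refine ⟨m, hm1, hmn, ?_⟩
      rw [Sset, if_neg (by omega), hxk]
      exact ⟨i - 1, by omega, by omega, rfl⟩
  · -- i ≤ m + 1 : x k = xvec N m i
    have ea : a = Nat.fib (m + 1 - i) ∧ b = Nat.fib (m + 2 - i) := by
      refine pair_uniq i hi a b _ _ ?_ ?_
      · rw [eqI, fib_idA i m hi hc]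
      · rw [eqII, fib_idB i m hi hc]
    have hxk : x k = xvec N m i := by
      funext j
      rcases eq_or_ne j p with rfl | hjp
      · rw [← hadef, ea.1, xvec_fst hi hiN]
      · rcases eq_or_ne j q with rfl | hjq
        · rw [← hbdef, ea.2, xvec_snd hi hiN]
        · rw [hsupp j hjp hjq]
          exact (xvec_eq_zero j (fun h => hjp (Fin.ext (by omega)))
            (fun h => hjq (Fin.ext (by omega)))).symm
    refine ⟨m, hm1, hmn, ?_⟩
    rw [Sset, if_neg (by omega), hxk]
    exact ⟨i, hi, by omega, rfl⟩


private lemma sum_xvec12 {N : ℕ} (hN : 1 ≤ N) (g : Fin N → ℕ) :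
    ∑ j, xvec N 1 2 j * g j = g ⟨0, hN⟩ := by
  have h00 : ((⟨0, hN⟩ : Fin N) : ℕ) = 0 := rfl
  rw [Finset.sum_eq_single (⟨0, hN⟩ : Fin N)]
  · have : xvec N 1 2 ⟨0, hN⟩ = 1 := by
      simp only [xvec]
      norm_num [Nat.fib_one]
    rw [this, one_mul]
  · intro j _ hj
    have hj0 : (j : ℕ) ≠ 0 := fun h => hj (Fin.ext h)
    rw [xvec_eq_zero j (by omega) (by omega), zero_mul]
  · intro h; exact absurd (Finset.mem_univ _) h

private lemma xvec12_mem_V (N : ℕ) (hN : 1 ≤ N) : xvec N 1 2 ∈ Vset N 1 := by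
  constructor
  · rw [sum_xvec12 hN]
  · rw [sum_xvec12 hN]

private lemma xvec12_SRestricted (N : ℕ) (hN : 1 ≤ N) : SRestricted N 1 (xvec N 1 2) := by
  intro K idx x hfac hK
  exfalso
  obtain ⟨hcomp, hsum⟩ := hfac
  have key : ∑ k : Fin K, Nat.fib (idx k) = 1 := by
    have h1 : ∑ j, xvec N 1 2 j * Nat.fib ((j : ℕ) + 1) = 1 := (xvec12_mem_V N hN).1
    rw [hsum] at h1
    calc ∑ k : Fin K, Nat.fib (idx k)
        = ∑ k : Fin K, ∑ j, x k j * Nat.fib ((j : ℕ) + 1) := by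
          refine Finset.sum_congr rfl fun k _ => ?_
          exact ((hcomp k).2.2.1).symm
      _ = ∑ j, ∑ k : Fin K, x k j * Nat.fib ((j : ℕ) + 1) := Finset.sum_comm
      _ = ∑ j, (∑ k : Fin K, x k) j * Nat.fib ((j : ℕ) + 1) := by
          refine Finset.sum_congr rfl fun j _ => ?_
          rw [Finset.sum_apply, Finset.sum_mul]
      _ = 1 := h1
  have hge : ∀ k, 1 ≤ Nat.fib (idx k) := fun k => Nat.fib_pos.mpr (hcomp k).1
  rcases Nat.lt_or_ge K 2 with h2 | h2
  · interval_cases K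
    · simp at key
    · exact hK rfl
  · obtain ⟨k0, k1, hne⟩ : ∃ a b : Fin K, a ≠ b := by
      refine ⟨⟨0, by omega⟩, ⟨1, by omega⟩, ?_⟩
      intro h
      have hv : (0 : ℕ) = 1 := congrArg Fin.val h
      omega
    have hle : Nat.fib (idx k0) + Nat.fib (idx k1) ≤ ∑ k : Fin K, Nat.fib (idx k) := by
      have h5 := Finset.sum_le_sum_of_subset (f := fun k => Nat.fib (idx k))
        (Finset.subset_univ ({k0, k1} : Finset (Fin K)))
      rwa [Finset.sum_pair hne] at h5
    have h3 := hge k0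
    have h4 := hge k1
    omega


/-- set containments of Theorem `MainProgress`: for `N ≥ 3` and `1 ≤ n ≤ N`,
`S_n ⊆ R_n ⊆ C_n ⊆ V_n`. -/
theorem stmt10 (N n : ℕ) (hN : 3 ≤ N) (h1n : 1 ≤ n) (hnN : n ≤ N) :
    Sset N n ⊆ Rset N n ∧ Rset N n ⊆ Cset N n ∧ Cset N n ⊆ Vset N n := by
  refine ⟨?_, fun z hz => hz.1, fun z hz => hz.1⟩
  intro z hz
  rcases eq_or_ne n 1 with rfl | hn
  · rw [Sset, if_pos rfl, Set.mem_singleton_iff] at hz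
    subst hz
    exact ⟨⟨xvec12_mem_V N (by omega), xvec_ACF N 1 2⟩, xvec12_SRestricted N (by omega)⟩
  · rw [Sset, if_neg hn] at hz
    obtain ⟨i, hi3, hin, rfl⟩ := hz
    exact ⟨⟨xvec_mem_V N n i hi3 hin hnN, xvec_ACF N n i⟩,
      xvec_SRestricted N n i hi3 hin hnN⟩
end

section
/- Let N ≥ 3 be an integer, let p, q be primes satisfying condition (W), and let n be an integer with 1 ≤ n ≤ N. Suppose X ⊆ Y ⊆ V_n and that for each z ∈ Y∖X the set {t ∈ (0,∞) : f_z(t) = min{f_x(t) : x ∈ V_n}} is finite. If min{f_x(t) : x ∈ Y} = min{f_x(t) : x ∈ V_n} for all t > 0, then for every t > 0 there exists x ∈ X with f_x(t) = min{f_y(t) : y ∈ V_n}; in particular min{f_x(t) : x ∈ X} = min{f_x(t) : x ∈ V_n} for all t > 0. -/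
open Real

lemma mmax_pos {p : ℕ} (q : ℕ) (hp : p.Prime) {k : ℕ} (hk : 1 ≤ k) : 0 < mmax p q k := by
  have h1 : (0:ℝ) < Real.log p := Real.log_pos (by exact_mod_cast hp.one_lt)
  have h2 : (0:ℝ) < Nat.fib k := by exact_mod_cast Nat.fib_pos.mpr hk
  exact lt_of_lt_of_le (mul_pos h2 h1) (le_max_left _ _)

lemma Vset_finite (N n : ℕ) : (Vset N n).Finite := by
  apply Set.Finite.subset (Set.finite_Icc (0 : Fin N → ℕ) (fun _ => Nat.fib n))
  rintro x ⟨h1, _⟩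
  refine ⟨fun i => Nat.zero_le _, fun i => ?_⟩
  calc x i ≤ x i * Nat.fib (i + 1) :=
        Nat.le_mul_of_pos_right _ (Nat.fib_pos.mpr (Nat.succ_le_succ (Nat.zero_le _)))
    _ ≤ ∑ j, x j * Nat.fib ((j:ℕ) + 1) :=
        Finset.single_le_sum (f := fun j => x j * Nat.fib ((j:ℕ)+1)) (fun j _ => Nat.zero_le _) (Finset.mem_univ i)
    _ = Nat.fib n := h1

lemma sum_pos_of_mem {N p q n : ℕ} (hp : p.Prime) (h1n : 1 ≤ n) {x : Fin N → ℕ}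
    (hx : x ∈ Vset N n) (t : ℝ) :
    0 < ∑ i, (x i : ℝ) * mmax p q ((i : ℕ) + 1) ^ t := by
  obtain ⟨i₀, hi₀⟩ : ∃ i, x i ≠ 0 := by
    by_contra h
    push_neg at h
    have : (0:ℕ) = Nat.fib n := by
      rw [← hx.1]; exact (Finset.sum_eq_zero (fun i _ => by rw [h i, Nat.zero_mul])).symm
    exact absurd this.symm (Nat.fib_pos.mpr h1n).ne'
  apply Finset.sum_pos' (fun i _ => mul_nonneg (Nat.cast_nonneg _)
    (Real.rpow_nonneg (le_of_lt (mmax_pos q hp (Nat.succ_le_succ (Nat.zero_le _)))) t))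
  exact ⟨i₀, Finset.mem_univ _, mul_pos (by exact_mod_cast Nat.pos_of_ne_zero hi₀)
    (Real.rpow_pos_of_pos (mmax_pos q hp (Nat.succ_le_succ (Nat.zero_le _))) t)⟩

lemma fmeas_continuousAt {N p q n : ℕ} (hp : p.Prime) (h1n : 1 ≤ n) {x : Fin N → ℕ}
    (hx : x ∈ Vset N n) {t₀ : ℝ} (ht₀ : 0 < t₀) :
    ContinuousAt (fun t => fmeas N p q x t) t₀ := by
  have hS : Continuous (fun t : ℝ => ∑ i, (x i : ℝ) * mmax p q ((i : ℕ) + 1) ^ t) := by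
    apply continuous_finset_sum
    intro i _
    have hm : mmax p q ((i:ℕ)+1) ≠ 0 := (mmax_pos q hp (Nat.succ_le_succ (Nat.zero_le _))).ne'
    exact continuous_const.mul (continuous_iff_continuousAt.mpr
      (fun b => continuousAt_const_rpow hm))
  unfold fmeas
  exact (hS.continuousAt).rpow
    ((continuousAt_const.div continuousAt_id ht₀.ne'))
    (Or.inl (sum_pos_of_mem hp h1n hx t₀).ne')

/-- Lemma `InfAttainSet`: for `N ≥ 3`, primes `p,q` satisfying (W) and
`1 ≤ n ≤ N`, suppose `X ⊆ Y ⊆ V_n` and for each `z ∈ Y \ X` the set of `t > 0` where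
`f_z(t)` attains `min{f_x(t) : x ∈ V_n}` is finite.  If the minimum over `Y` equals the
minimum over `V_n` for all `t > 0`, then for every `t > 0` some `x ∈ X` attains the
minimum over `V_n`; in particular the minimum over `X` equals the minimum over `V_n`. -/
theorem stmt11 (N p q n : ℕ) (hN : 3 ≤ N) (hp : p.Prime) (hq : q.Prime) (hW : CondW N p q)
    (h1n : 1 ≤ n) (hnN : n ≤ N)
    (X Y : Set (Fin N → ℕ)) (hXY : X ⊆ Y) (hYV : Y ⊆ Vset N n)
    (hfin : ∀ z ∈ Y \ X,
      {t : ℝ | 0 < t ∧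
        IsLeast ((fun x => fmeas N p q x t) '' Vset N n) (fmeas N p q z t)}.Finite)
    (hY : ∀ t : ℝ, 0 < t → ∃ m : ℝ,
      IsLeast ((fun x => fmeas N p q x t) '' Y) m ∧
      IsLeast ((fun x => fmeas N p q x t) '' Vset N n) m) :
    ∀ t : ℝ, 0 < t →
      (∃ x ∈ X, IsLeast ((fun x' => fmeas N p q x' t) '' Vset N n) (fmeas N p q x t)) ∧
      ∃ m : ℝ, IsLeast ((fun x => fmeas N p q x t) '' X) m ∧
        IsLeast ((fun x => fmeas N p q x t) '' Vset N n) m := by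
  have hYfin : (Y \ X).Finite := (Vset_finite N n).subset (fun z hz => hYV hz.1)
  set U : (Fin N → ℕ) → Set ℝ := fun z => {t : ℝ | 0 < t ∧
    IsLeast ((fun x => fmeas N p q x t) '' Vset N n) (fmeas N p q z t)} with hU
  have hF : (⋃ z ∈ Y \ X, U z).Finite := Set.Finite.biUnion hYfin (fun z hz => hfin z hz)
  set F := ⋃ z ∈ Y \ X, U z with hFdef
  have key : ∀ t : ℝ, 0 < t → t ∉ F → ∃ x ∈ X,
      IsLeast ((fun x' => fmeas N p q x' t) '' Vset N n) (fmeas N p q x t) := by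
    intro t ht htF
    obtain ⟨m, hmY, hmV⟩ := hY t ht
    obtain ⟨z, hz, hzm⟩ := hmY.1
    rw [← hzm] at hmV
    by_cases hzX : z ∈ X
    · exact ⟨z, hzX, hmV⟩
    · have hzYX : z ∈ Y \ X := Set.mem_diff_of_mem hz hzX
      have htU : t ∈ U z := ⟨ht, hmV⟩
      exact absurd (Set.mem_biUnion hzYX htU) htF
  intro t₀ ht₀
  have main : ∃ x ∈ X,
      IsLeast ((fun x' => fmeas N p q x' t₀) '' Vset N n) (fmeas N p q x t₀) := by
    set A : (Fin N → ℕ) → Set ℝ := fun x => {t : ℝ | t₀ < t ∧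
      IsLeast ((fun x' => fmeas N p q x' t) '' Vset N n) (fmeas N p q x t)} with hA
    have hsub : Set.Ioi t₀ \ F ⊆ ⋃ x ∈ X, A x := by
      rintro t ⟨ht1, ht2⟩
      obtain ⟨x, hxX, hx⟩ := key t (ht₀.trans ht1) ht2
      exact Set.mem_biUnion hxX ⟨ht1, hx⟩
    have hclo : t₀ ∈ closure (Set.Ioi t₀ \ F) := by
      rw [_root_.mem_closure_iff]
      intro o ho ht₀o
      obtain ⟨ε, hε, hball⟩ := Metric.isOpen_iff.mp ho t₀ ht₀o
      have hinf : (Set.Ioo t₀ (t₀ + ε)).Infinite := Set.Ioo_infinite (by linarith)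
      obtain ⟨t, ht⟩ := (hinf.diff hF).nonempty
      refine ⟨t, hball ?_, ht.1.1, ht.2⟩
      rw [Metric.mem_ball, Real.dist_eq, abs_lt]
      exact ⟨by linarith [ht.1.1], by linarith [ht.1.2]⟩
    have hXfin : X.Finite := (Vset_finite N n).subset (fun x hx => hYV (hXY hx))
    have hmem : t₀ ∈ ⋃ x ∈ X, closure (A x) := by
      rw [← hXfin.closure_biUnion]
      exact closure_mono hsub hclo
    obtain ⟨x, hxX, hxc⟩ := Set.mem_iUnion₂.mp hmem
    have hxV : x ∈ Vset N n := hYV (hXY hxX)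
    refine ⟨x, hxX, ⟨x, hxV, rfl⟩, ?_⟩
    rintro m ⟨v, hv, rfl⟩
    haveI hne : (nhdsWithin t₀ (A x)).NeBot := mem_closure_iff_nhdsWithin_neBot.mp hxc
    have hcx := (fmeas_continuousAt (q := q) hp h1n hxV ht₀).continuousWithinAt (s := A x)
    have hcv := (fmeas_continuousAt (q := q) hp h1n hv ht₀).continuousWithinAt (s := A x)
    apply le_of_tendsto_of_tendsto hcx hcv
    filter_upwards [self_mem_nhdsWithin] with t ht
    exact ht.2.2 ⟨v, hv, rfl⟩
  refine ⟨main, ?_⟩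
  obtain ⟨x, hxX, hxle⟩ := main
  refine ⟨fmeas N p q x t₀, ⟨⟨x, hxX, rfl⟩, ?_⟩, hxle⟩
  rintro m ⟨v, hv, rfl⟩
  exact hxle.2 ⟨v, hYV (hXY hv), rfl⟩
end
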